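/- Let α > β > 0, and let f be the density of the product X·Y of independent random variables X ~ Gamma(shape α, rate α) and Y ~ Gamma(shape β, rate β), i.e. f(h) = ∫_0^∞ x^{−1}·f_X(x)·f_Y(h/x) dx for h > 0, where f_X(x) = α^α x^{α−1} e^{−αx}/Γ(α) and f_Y(y) = β^β y^{β−1} e^{−βy}/Γ(β). Then lim_{h→0+} f(h)/h^{β−1} = (αβ)^β · Γ(α−β) / (Γ(α)·Γ(β)). -/

import Mathlib

open MeasureTheory Real Filter

lemma gg_aux_integrable (a b : ℝ) (hb : 0 < b) (hba : b < a) :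
    IntegrableOn (fun x : ℝ => x ^ (a - b - 1) * Real.exp (-(a * x))) (Set.Ioi 0) := by
  have h := integrableOn_rpow_mul_exp_neg_mul_rpow (p := 1) (s := a - b - 1) (b := a)
    (by linarith) one_pos (by linarith)
  refine h.congr_fun (fun x hx => ?_) measurableSet_Ioi
  simp only [Real.rpow_one]
  ring_nf

lemma gg_aux_meas (a b h : ℝ) :
    AEStronglyMeasurable
      (fun x : ℝ => x ^ (a - b - 1) * Real.exp (-(a * x)) * Real.exp (-(b * (h / x))))
      (volume.restrict (Set.Ioi 0)) := by
  apply Measurable.aestronglyMeasurable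
  fun_prop

/-- Small-argument asymptotics of the gamma-gamma density (for `α > β > 0`), given by the
multiplicative convolution `f(h) = ∫_0^∞ x⁻¹ f_X(x) f_Y(h/x) dx` of the densities of
`Gamma(α,α)` and `Gamma(β,β)`: `f(h)/h^{β−1} → (αβ)^β Γ(α−β)/(Γ(α)Γ(β))` as `h → 0⁺`. -/
theorem gammaGamma_density_small_argument (a b : ℝ) (hb : 0 < b) (hba : b < a) :
    Filter.Tendsto
      (fun h : ℝ =>
        (∫ x in Set.Ioi (0 : ℝ),
          x⁻¹ * (a ^ a * x ^ (a - 1) * Real.exp (-(a * x)) / Real.Gamma a) *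
            (b ^ b * (h / x) ^ (b - 1) * Real.exp (-(b * (h / x))) / Real.Gamma b)) /
          h ^ (b - 1))
      (nhdsWithin 0 (Set.Ioi 0))
      (nhds ((a * b) ^ b * Real.Gamma (a - b) / (Real.Gamma a * Real.Gamma b))) := by
  have ha : 0 < a := hb.trans hba
  set C : ℝ := a ^ a * b ^ b / (Real.Gamma a * Real.Gamma b) with hC
  set g : ℝ → ℝ → ℝ := fun h x =>
    x ^ (a - b - 1) * Real.exp (-(a * x)) * Real.exp (-(b * (h / x))) with hg
  -- Step 1: dominated convergence for `fun h => ∫ g h`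
  have key : Tendsto (fun h : ℝ => ∫ x in Set.Ioi (0 : ℝ), g h x)
      (nhdsWithin 0 (Set.Ioi 0))
      (nhds (∫ x in Set.Ioi (0 : ℝ), x ^ (a - b - 1) * Real.exp (-(a * x)))) := by
    apply MeasureTheory.tendsto_integral_filter_of_dominated_convergence
      (fun x => x ^ (a - b - 1) * Real.exp (-(a * x)))
    · exact Filter.Eventually.of_forall (fun h => gg_aux_meas a b h)
    · filter_upwards [self_mem_nhdsWithin] with h hh
      refine (ae_restrict_iff' measurableSet_Ioi).2 (Filter.Eventually.of_forall fun x hx => ?_)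
      have hx0 : (0:ℝ) < x := hx
      have hh0 : (0:ℝ) < h := hh
      have h1 : Real.exp (-(b * (h / x))) ≤ 1 := by
        rw [Real.exp_le_one_iff]
        have : 0 ≤ b * (h / x) := mul_nonneg hb.le (div_nonneg hh0.le hx0.le)
        linarith
      have h2 : 0 ≤ x ^ (a - b - 1) * Real.exp (-(a * x)) := by positivity
      rw [Real.norm_eq_abs, abs_of_nonneg (by positivity)]
      calc x ^ (a - b - 1) * Real.exp (-(a * x)) * Real.exp (-(b * (h / x)))
          ≤ x ^ (a - b - 1) * Real.exp (-(a * x)) * 1 := by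
            exact mul_le_mul_of_nonneg_left h1 h2
        _ = x ^ (a - b - 1) * Real.exp (-(a * x)) := by ring
    · exact gg_aux_integrable a b hb hba
    · refine (ae_restrict_iff' measurableSet_Ioi).2 (Filter.Eventually.of_forall fun x hx => ?_)
      have hx0 : (0:ℝ) < x := hx
      have hcont : Tendsto (fun h : ℝ =>
          x ^ (a - b - 1) * Real.exp (-(a * x)) * Real.exp (-(b * (h / x)))) (nhds 0)
          (nhds (x ^ (a - b - 1) * Real.exp (-(a * x)) * Real.exp (-(b * (0 / x))))) := by
        apply Tendsto.const_mul
        exact (Real.continuous_exp.comp (by continuity)).tendsto 0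
      simpa [hg] using hcont.mono_left (nhdsWithin_le_nhds (s := Set.Ioi (0:ℝ)))
  -- Step 2: eventual equality of the original function with `C * ∫ g h`
  have heq : (fun h : ℝ =>
        (∫ x in Set.Ioi (0 : ℝ),
          x⁻¹ * (a ^ a * x ^ (a - 1) * Real.exp (-(a * x)) / Real.Gamma a) *
            (b ^ b * (h / x) ^ (b - 1) * Real.exp (-(b * (h / x))) / Real.Gamma b)) /
          h ^ (b - 1))
      =ᶠ[nhdsWithin 0 (Set.Ioi 0)] (fun h => C * ∫ x in Set.Ioi (0 : ℝ), g h x) := by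
    filter_upwards [self_mem_nhdsWithin] with h hh
    have hh0 : (0:ℝ) < h := hh
    have hpow : h ^ (b - 1) ≠ 0 := (Real.rpow_pos_of_pos hh0 _).ne'
    have hint : (∫ x in Set.Ioi (0 : ℝ),
          x⁻¹ * (a ^ a * x ^ (a - 1) * Real.exp (-(a * x)) / Real.Gamma a) *
            (b ^ b * (h / x) ^ (b - 1) * Real.exp (-(b * (h / x))) / Real.Gamma b))
        = ∫ x in Set.Ioi (0 : ℝ), h ^ (b - 1) * (C * g h x) := by
      refine setIntegral_congr_fun measurableSet_Ioi (fun x hx => ?_)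
      have hx0 : (0:ℝ) < x := hx
      have hdiv : (h / x) ^ (b - 1) = h ^ (b - 1) / x ^ (b - 1) :=
        Real.div_rpow hh0.le hx0.le _
      have hxpow : x ^ (a - b - 1) = x ^ (-1 : ℝ) * x ^ (a - 1) / x ^ (b - 1) := by
        rw [← Real.rpow_add hx0, ← Real.rpow_sub hx0]
        ring_nf
      rw [hdiv]
      simp only [hg, hxpow, Real.rpow_neg_one, hC]
      ring
    rw [hint, MeasureTheory.integral_const_mul, mul_div_cancel_left₀ _ hpow,
      MeasureTheory.integral_const_mul]
  -- Step 3: identify the limit value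
  have hval : C * (∫ x in Set.Ioi (0 : ℝ), x ^ (a - b - 1) * Real.exp (-(a * x)))
      = (a * b) ^ b * Real.Gamma (a - b) / (Real.Gamma a * Real.Gamma b) := by
    have hint : (∫ x in Set.Ioi (0 : ℝ), x ^ (a - b - 1) * Real.exp (-(a * x)))
        = (1 / a) ^ (a - b) * Real.Gamma (a - b) := by
      exact integral_rpow_mul_exp_neg_mul_Ioi (a := a - b) (r := a) (by linarith) ha
    rw [hint, hC]
    have h1 : a ^ a * (1 / a) ^ (a - b) = a ^ b := by
      rw [one_div, ← Real.rpow_neg_one, ← Real.rpow_mul ha.le, ← Real.rpow_add ha]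
      congr 1; ring
    have h2 : (a * b) ^ b = a ^ b * b ^ b := Real.mul_rpow ha.le hb.le
    field_simp
    rw [h2, ← h1]
    ring
  refine Tendsto.congr' heq.symm ?_
  rw [← hval]
  exact key.const_mul C
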